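/- If a random variable f satisfies (E|f|^m)^{1/m} ≤ m^{1/l} for all m ≥ 1, where l > 0, then there exists a constant C(l) > 0 such that P(|f| > u) ≤ exp(−C(l) u^l) for all u ≥ 1. -/

import Mathlib

open MeasureTheory ENNReal

/-- if `(E|f|^m)^{1/m} ≤ m^{1/l}` for all `m ≥ 1`, where `l > 0`, then
there exists `C(l) > 0` with `P(|f| > u) ≤ exp(−C(l) u^l)` for all `u ≥ 1`. -/
theorem stmt10 {Ω : Type*} [MeasurableSpace Ω] (P : Measure Ω) [IsProbabilityMeasure P]
    (f : Ω → ℝ) (hf : Measurable f) (l : ℝ) (hl : 0 < l)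
    (hmom : ∀ m : ℝ, 1 ≤ m →
      (∫⁻ ω, (ENNReal.ofReal |f ω|) ^ m ∂P) ^ (1 / m) ≤ ENNReal.ofReal (m ^ (1 / l))) :
    ∃ C : ℝ, 0 < C ∧ ∀ u : ℝ, 1 ≤ u →
      P {ω | |f ω| > u} ≤ ENNReal.ofReal (Real.exp (-C * u ^ l)) := by
  -- Markov bound
  have markov : ∀ m : ℝ, 1 ≤ m → ∀ u : ℝ, 0 < u →
      P {ω | |f ω| > u} ≤ ENNReal.ofReal (m ^ (m / l) / u ^ m) := by
    intro m hm u hu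
    have hmpos : (0:ℝ) < m := lt_of_lt_of_le one_pos hm
    have hgm : AEMeasurable (fun ω => (ENNReal.ofReal |f ω|) ^ m) P := by
      fun_prop
    have hI : (∫⁻ ω, (ENNReal.ofReal |f ω|) ^ m ∂P) ≤ (ENNReal.ofReal (m ^ (1/l))) ^ m := by
      have h := hmom m hm
      have := ENNReal.rpow_le_rpow h hmpos.le
      rwa [← ENNReal.rpow_mul, one_div, inv_mul_cancel₀ hmpos.ne', ENNReal.rpow_one] at this
    have hε0 : (ENNReal.ofReal u) ^ m ≠ 0 := by
      simp [ENNReal.rpow_eq_zero_iff, ENNReal.ofReal_pos.2 hu, hmpos, (ENNReal.ofReal_lt_top).ne,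
        hmpos.ne', not_lt.2 hmpos.le, hu]
    have hεt : (ENNReal.ofReal u) ^ m ≠ ∞ := by
      exact ENNReal.rpow_ne_top_of_nonneg hmpos.le ENNReal.ofReal_ne_top
    have hsub : {ω | |f ω| > u} ⊆ {ω | (ENNReal.ofReal u) ^ m ≤ (ENNReal.ofReal |f ω|) ^ m} := by
      intro ω hω
      exact ENNReal.rpow_le_rpow (ENNReal.ofReal_le_ofReal (le_of_lt hω)) hmpos.le
    calc P {ω | |f ω| > u} ≤ P {ω | (ENNReal.ofReal u) ^ m ≤ (ENNReal.ofReal |f ω|) ^ m} :=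
          measure_mono hsub
      _ ≤ (∫⁻ ω, (ENNReal.ofReal |f ω|) ^ m ∂P) / (ENNReal.ofReal u) ^ m :=
          meas_ge_le_lintegral_div hgm hε0 hεt
      _ ≤ (ENNReal.ofReal (m ^ (1/l))) ^ m / (ENNReal.ofReal u) ^ m :=
          ENNReal.div_le_div hI le_rfl
      _ = ENNReal.ofReal (m ^ (m / l) / u ^ m) := by
          rw [ENNReal.ofReal_rpow_of_pos (Real.rpow_pos_of_pos hmpos _),
            ENNReal.ofReal_rpow_of_pos hu, ← Real.rpow_mul hmpos.le, one_div,
            inv_mul_eq_div, ← ENNReal.ofReal_div_of_pos (Real.rpow_pos_of_pos hu _)]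
  -- P(|f| > 1) < 1
  have hplt : P {ω | |f ω| > 1} < 1 := by
    by_contra hcon
    push_neg at hcon
    have hp1 : P {ω | |f ω| > 1} = 1 := le_antisymm prob_le_one hcon
    have h1 : (∫⁻ ω, ENNReal.ofReal |f ω| ∂P) ≤ 1 := by
      have := hmom 1 le_rfl
      simpa using this
    set S : ℕ → Set Ω := fun n => {ω | 1 + 1/(n+1 : ℝ) ≤ |f ω|} with hS
    have hSmeas : ∀ n, MeasurableSet (S n) := fun n =>
      measurableSet_le measurable_const hf.abs
    have hmono : Monotone S := by
      intro a b hab ω hω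
      simp only [hS, Set.mem_setOf_eq] at hω ⊢
      have h1 : ((a:ℝ)+1) ≤ (b:ℝ)+1 := by exact_mod_cast Nat.succ_le_succ hab
      have h2 : (1:ℝ)/((b:ℝ)+1) ≤ 1/((a:ℝ)+1) := by
        apply div_le_div_of_nonneg_left one_pos.le (by positivity) h1
      linarith
    have hUnion : {ω | |f ω| > 1} = ⋃ n, S n := by
      ext ω
      simp only [Set.mem_setOf_eq, Set.mem_iUnion, hS]
      constructor
      · intro hω
        obtain ⟨n, hn⟩ := exists_nat_one_div_lt (sub_pos.2 hω)
        exact ⟨n, by push_cast at hn ⊢; linarith⟩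
      · rintro ⟨n, hn⟩
        have hp : (0:ℝ) < 1/((n:ℝ)+1) := by positivity
        linarith
    have hsup : (⨆ n, P (S n)) = 1 := by
      rw [← hmono.directed_le.measure_iUnion, ← hUnion]
      exact hp1
    obtain ⟨n, hn⟩ : ∃ n, P (S n) ≠ 0 := by
      by_contra hall
      push_neg at hall
      simp [hall] at hsup
    set δ : ℝ := 1/((n:ℝ)+1) with hδ
    have hδpos : 0 < δ := by positivity
    have hcompl : P (S n)ᶜ = 1 - P (S n) := by
      rw [measure_compl (hSmeas n) (measure_ne_top P _), measure_univ]
    have hint1 : ENNReal.ofReal (1+δ) * P (S n) ≤ ∫⁻ ω in S n, ENNReal.ofReal |f ω| ∂P := by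
      calc ENNReal.ofReal (1+δ) * P (S n)
          = ∫⁻ _ in S n, ENNReal.ofReal (1+δ) ∂P := (setLIntegral_const _ _).symm
        _ ≤ _ := setLIntegral_mono hf.abs.ennreal_ofReal
            (fun ω hω => ENNReal.ofReal_le_ofReal hω)
    have hnull : P {ω | |f ω| > 1}ᶜ = 0 := by
      rw [measure_compl (measurableSet_lt measurable_const hf.abs) (measure_ne_top P _),
        measure_univ, hp1, tsub_self]
    have hint2 : P (S n)ᶜ ≤ ∫⁻ ω in (S n)ᶜ, ENNReal.ofReal |f ω| ∂P := by
      calc P (S n)ᶜ = P ((S n)ᶜ ∩ {ω | |f ω| > 1}) := (measure_inter_conull hnull).symm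
        _ = ∫⁻ _ in (S n)ᶜ ∩ {ω | |f ω| > 1}, 1 ∂P := by rw [setLIntegral_one]
        _ ≤ ∫⁻ ω in (S n)ᶜ ∩ {ω | |f ω| > 1}, ENNReal.ofReal |f ω| ∂P :=
            setLIntegral_mono hf.abs.ennreal_ofReal
              (fun ω hω => ENNReal.one_le_ofReal.2 hω.2.le)
        _ ≤ _ := lintegral_mono_set Set.inter_subset_left
    have hle1 : P (S n) ≤ 1 := prob_le_one
    have htotal : ENNReal.ofReal (1+δ) * P (S n) + (1 - P (S n)) ≤ 1 := by
      calc ENNReal.ofReal (1+δ) * P (S n) + (1 - P (S n))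
          ≤ (∫⁻ ω in S n, ENNReal.ofReal |f ω| ∂P)
            + (∫⁻ ω in (S n)ᶜ, ENNReal.ofReal |f ω| ∂P) :=
            add_le_add hint1 (hcompl ▸ hint2)
        _ = ∫⁻ ω, ENNReal.ofReal |f ω| ∂P := lintegral_add_compl _ (hSmeas n)
        _ ≤ 1 := h1
    have hexp : ENNReal.ofReal (1+δ) * P (S n) + (1 - P (S n))
        = 1 + ENNReal.ofReal δ * P (S n) := by
      rw [ENNReal.ofReal_add zero_le_one hδpos.le, ENNReal.ofReal_one, add_mul, one_mul]
      calc P (S n) + ENNReal.ofReal δ * P (S n) + (1 - P (S n))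
          = (1 - P (S n)) + P (S n) + ENNReal.ofReal δ * P (S n) := by ring
        _ = 1 + ENNReal.ofReal δ * P (S n) := by rw [tsub_add_cancel_of_le hle1]
    rw [hexp] at htotal
    have hdz : ENNReal.ofReal δ * P (S n) ≠ 0 :=
      mul_ne_zero (ENNReal.ofReal_pos.2 hδpos).ne' hn
    exact absurd htotal (not_le.2 (ENNReal.lt_add_right one_ne_top hdz))
  -- main argument
  set e : ℝ := Real.exp 1 with he
  have hepos : (0:ℝ) < e := Real.exp_pos 1
  have hptop : P {ω | |f ω| > 1} ≠ ∞ := measure_ne_top P _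
  set q : ℝ := max (P {ω | |f ω| > 1}).toReal (Real.exp (-1)) with hq
  have hq0 : 0 < q := lt_of_lt_of_le (Real.exp_pos _) (le_max_right _ _)
  have hp' : (P {ω | |f ω| > 1}).toReal < 1 := by
    rw [← ENNReal.toReal_one]
    exact (ENNReal.toReal_lt_toReal hptop one_ne_top).2 hplt
  have hexp1 : Real.exp (-1) < 1 := by
    rw [← Real.exp_zero]
    exact Real.exp_lt_exp.2 (by norm_num)
  have hq1 : q < 1 := max_lt hp' hexp1
  have hlogq : Real.log q < 0 := Real.log_neg hq0 hq1
  set C : ℝ := min (1/(e*l)) (-Real.log q / e) with hCdef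
  have hCpos : 0 < C := lt_min (by positivity) (div_pos (neg_pos.2 hlogq) hepos)
  have hCe : C ≤ 1/(e*l) := min_le_left _ _
  have hCq : C * e ≤ -Real.log q := by
    have h := min_le_right (1/(e*l)) (-Real.log q / e)
    calc C * e ≤ (-Real.log q / e) * e :=
          mul_le_mul_of_nonneg_right h hepos.le
      _ = -Real.log q := div_mul_cancel₀ _ hepos.ne'
  refine ⟨C, hCpos, ?_⟩
  intro u hu
  have hu0 : (0:ℝ) < u := lt_of_lt_of_le one_pos hu
  have hulpos : 0 < u ^ l := Real.rpow_pos_of_pos hu0 l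
  by_cases hce : u ^ l ≤ e
  · -- small u case
    have hsub : {ω | |f ω| > u} ⊆ {ω | |f ω| > 1} := fun ω hω =>
      lt_of_le_of_lt hu hω
    calc P {ω | |f ω| > u} ≤ P {ω | |f ω| > 1} := measure_mono hsub
      _ = ENNReal.ofReal (P {ω | |f ω| > 1}).toReal := (ENNReal.ofReal_toReal hptop).symm
      _ ≤ ENNReal.ofReal (Real.exp (-C * u ^ l)) := by
          apply ENNReal.ofReal_le_ofReal
          have h5 : (P {ω | |f ω| > 1}).toReal ≤ q := le_max_left _ _
          refine le_trans h5 ?_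
          rw [← Real.exp_log hq0]
          apply Real.exp_le_exp.2
          have h1 : C * u ^ l ≤ C * e := mul_le_mul_of_nonneg_left hce hCpos.le
          linarith
  · -- large u case
    push_neg at hce
    set m : ℝ := u ^ l / e with hmdef
    have hm1 : 1 ≤ m := (one_le_div hepos).2 hce.le
    have hmpos : (0:ℝ) < m := lt_of_lt_of_le one_pos hm1
    refine le_trans (markov m hm1 u hu0) (ENNReal.ofReal_le_ofReal ?_)
    have hlogm : Real.log m = l * Real.log u - 1 := by
      rw [hmdef, Real.log_div (by positivity) hepos.ne', Real.log_rpow hu0, he, Real.log_exp]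
    have h1 : m ^ (m/l) = Real.exp (Real.log m * (m/l)) := Real.rpow_def_of_pos hmpos _
    have h2 : u ^ m = Real.exp (Real.log u * m) := Real.rpow_def_of_pos hu0 _
    rw [h1, h2, ← Real.exp_sub]
    apply Real.exp_le_exp.2
    rw [hlogm]
    have key : (l * Real.log u - 1) * (m/l) - Real.log u * m = -(m/l) := by
      field_simp
      ring
    rw [key]
    have hmla : m / l = u ^ l / (e*l) := by rw [hmdef, div_div]
    have h3 : C * u ^ l ≤ (1/(e*l)) * u ^ l := mul_le_mul_of_nonneg_right hCe hulpos.le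
    have h4 : (1/(e*l)) * u ^ l = u ^ l / (e*l) := by ring
    linarith [hmla, h3, h4]
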